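/- With the construction of the previous statement (sensors at 1/2, radii ρᵢ = aᵢ/(2(B+1)) and ρ_{n+1} = 1/(2(B+1)), batteries bᵢ = a·ρᵢ^α + a/2 for i ≤ n and b_{n+1} = a·ρ_{n+1}^α, with α ≥ 1 and a > 0): if a feasible pair (y, r) with rᵢ ∈ {0, ρᵢ} covers [0,1] with strictly positive lifetime, then rᵢ = ρᵢ for all i, sensor n+1 remains at y_{n+1} = 1/2, and there exists I ⊆ {1,…,n} with ∑_{i∈I} aᵢ = B/2. -/

import Mathlib

open MeasureTheory Finset
open scoped ENNReal

theorem partition_reduction_backward (n : ℕ) (a α : ℝ) (ha : 0 < a) (hα : 1 ≤ α)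
    (w : Fin n → ℕ) (hw : ∀ i, 0 < w i) (B : ℕ) (hB : B = ∑ i, w i)
    (ρ bat : Fin (n+1) → ℝ)
    (hρ : ∀ i : Fin n, ρ i.castSucc = (w i : ℝ) / (2*((B:ℝ)+1)))
    (hρl : ρ (Fin.last n) = 1 / (2*((B:ℝ)+1)))
    (hbat : ∀ i : Fin n, bat i.castSucc = a * ρ i.castSucc ^ α + a/2)
    (hbatl : bat (Fin.last n) = a * ρ (Fin.last n) ^ α)
    (y r : Fin (n+1) → ℝ)
    (hr : ∀ i, r i = 0 ∨ r i = ρ i)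
    (t : ℝ) (ht : 0 < t)
    (henergy : ∀ i, a * |y i - 1/2| + t * r i ^ α ≤ bat i)
    (hcover : Set.Icc (0:ℝ) 1 ⊆ ⋃ i, Set.Icc (y i - r i) (y i + r i)) :
    (∀ i, r i = ρ i) ∧ y (Fin.last n) = 1/2 ∧
    ∃ I : Finset (Fin n), ∑ i ∈ I, (w i : ℝ) = (B:ℝ)/2 := by
  classical
  have hBc : (0:ℝ) ≤ (B:ℝ) := Nat.cast_nonneg B
  set u : ℝ := 1 / (2*((B:ℝ)+1)) with hu_def
  have hu : 0 < u := by rw [hu_def]; positivity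
  have hu2 : u ≤ 1/2 := by
    rw [hu_def]
    apply one_div_le_one_div_of_le (by norm_num) (by nlinarith)
  have hhalf : u * ((B:ℝ)+1) = 1/2 := by
    rw [hu_def]; field_simp
  have hρc : ∀ i : Fin n, ρ i.castSucc = (w i : ℝ) * u := by
    intro i; rw [hρ, hu_def]; ring
  have hρpos : ∀ i, 0 < ρ i := by
    intro i
    rcases Fin.eq_castSucc_or_eq_last i with ⟨j, rfl⟩ | rfl
    · rw [hρc]
      have := hw j
      have : (0:ℝ) < w j := by exact_mod_cast this
      positivity
    · rw [hρl]; exact hu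
  have hsumρ : ∑ i, ρ i = 1/2 := by
    rw [Fin.sum_univ_castSucc]
    have : ∑ i : Fin n, ρ i.castSucc = (B:ℝ) * u := by
      rw [Finset.sum_congr rfl (fun i _ => hρc i), ← Finset.sum_mul, hB]
      norm_cast
    rw [this, hρl]
    linarith [hhalf]
  -- Step 1 : total measure forces r = ρ
  have hr0 : ∀ i, 0 ≤ r i := by
    intro i
    rcases hr i with h | h
    · exact le_of_eq h.symm
    · rw [h]; exact (hρpos i).le
  have hone : (1:ℝ) ≤ ∑ i, 2 * r i := by
    have hm : ENNReal.ofReal 1 ≤ ENNReal.ofReal (∑ i, 2 * r i) := by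
      calc ENNReal.ofReal 1 = volume (Set.Icc (0:ℝ) 1) := by
            rw [Real.volume_Icc]; norm_num
        _ ≤ volume (⋃ i, Set.Icc (y i - r i) (y i + r i)) := measure_mono hcover
        _ ≤ ∑ i, volume (Set.Icc (y i - r i) (y i + r i)) := measure_iUnion_fintype_le _ _
        _ = ∑ i, ENNReal.ofReal (2 * r i) := by
            apply Finset.sum_congr rfl
            intro i _
            rw [Real.volume_Icc]
            congr 1
            ring
        _ = ENNReal.ofReal (∑ i, 2 * r i) :=
            (ENNReal.ofReal_sum_of_nonneg (fun i _ => by linarith [hr0 i])).symm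
    exact (ENNReal.ofReal_le_ofReal_iff
      (Finset.sum_nonneg fun i _ => by linarith [hr0 i])).mp (by simpa using hm)
  have hreq : ∀ i, r i = ρ i := by
    intro j
    rcases hr j with h0 | h
    · exfalso
      have hlt : ∑ i, 2 * r i < ∑ i, 2 * ρ i := by
        apply Finset.sum_lt_sum
        · intro i _
          rcases hr i with h | h
          · rw [h]; linarith [hρpos i]
          · rw [h]
        · exact ⟨j, Finset.mem_univ _, by rw [h0]; linarith [hρpos j]⟩
      have hsum2 : ∑ i, 2 * ρ i = 1 := by
        rw [← Finset.mul_sum, hsumρ]; norm_num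
      linarith
    · exact h
  simp only [hreq] at hcover henergy
  set A : Fin (n+1) → Set ℝ := fun i => Set.Icc (y i - ρ i) (y i + ρ i) with hA_def
  have hvol : ∀ i, volume (A i) = ENNReal.ofReal (2 * ρ i) := by
    intro i; rw [hA_def]; simp only []
    rw [Real.volume_Icc]; congr 1; ring
  have hsumvol : ∑ i, volume (A i) = 1 := by
    rw [Finset.sum_congr rfl (fun i _ => hvol i),
      ← ENNReal.ofReal_sum_of_nonneg (fun i _ => by linarith [hρpos i])]
    have h2 : ∑ i, 2 * ρ i = 1 := by
      rw [← Finset.mul_sum, hsumρ]; norm_num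
    rw [h2]; simp
  set Y : ℝ := y (Fin.last n) with hY_def
  -- Position bound for the last sensor
  have hYb : |Y - 1/2| < u := by
    have he := henergy (Fin.last n)
    rw [hbatl, hρl] at he
    have hup : 0 < u ^ α := Real.rpow_pos_of_pos hu α
    have h2 : |Y - 1/2| < u ^ α := by
      rw [← hY_def] at he
      nlinarith [mul_pos ht hup, abs_nonneg (Y - 1/2)]
    have h3 : u ^ α ≤ u := by
      have := Real.rpow_le_rpow_of_exponent_ge hu (by linarith) hα
      rwa [Real.rpow_one] at this
    linarith
  have hY1 : Y - 1/2 < u := (abs_lt.mp hYb).2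
  have hY2 : -u < Y - 1/2 := (abs_lt.mp hYb).1
  -- Each other interval is (a.e.) disjoint from the last interval
  have hAlast : A (Fin.last n) = Set.Icc (Y - u) (Y + u) := by
    simp only [hA_def]
    rw [hρl, ← hY_def]
  have hdisj : ∀ j : Fin n,
      y j.castSucc + ρ j.castSucc ≤ Y - u ∨ Y + u ≤ y j.castSucc - ρ j.castSucc := by
    intro j
    have hne : j.castSucc ≠ Fin.last n := (Fin.castSucc_lt_last j).ne
    set s : Finset (Fin (n+1)) :=
      (Finset.univ.erase (Fin.last n)).erase j.castSucc with hs_def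
    have hsub : (⋃ k, A k) ⊆ (A j.castSucc ∪ A (Fin.last n)) ∪ ⋃ k ∈ s, A k := by
      intro x hx
      obtain ⟨k, hk⟩ := Set.mem_iUnion.mp hx
      by_cases h1 : k = j.castSucc
      · exact Or.inl (Or.inl (h1 ▸ hk))
      by_cases h2 : k = Fin.last n
      · exact Or.inl (Or.inr (h2 ▸ hk))
      · exact Or.inr (Set.mem_biUnion
          (Finset.mem_erase.mpr ⟨h1, Finset.mem_erase.mpr ⟨h2, Finset.mem_univ _⟩⟩) hk)
    have e1 : volume (A j.castSucc ∪ A (Fin.last n)) + volume (A j.castSucc ∩ A (Fin.last n))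
        = volume (A j.castSucc) + volume (A (Fin.last n)) :=
      measure_union_add_inter _ measurableSet_Icc
    have e2 : volume (⋃ k, A k) ≤ volume (A j.castSucc ∪ A (Fin.last n))
        + ∑ k ∈ s, volume (A k) := by
      refine (measure_mono hsub).trans ?_
      refine (measure_union_le _ _).trans ?_
      exact add_le_add_right (measure_biUnion_finset_le s A) _
    have e3 : volume (A j.castSucc) + volume (A (Fin.last n)) + ∑ k ∈ s, volume (A k)
        = 1 := by
      have t1 : volume (A j.castSucc) + ∑ k ∈ s, volume (A k)
          = ∑ k ∈ Finset.univ.erase (Fin.last n), volume (A k) := by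
        rw [hs_def]
        exact Finset.add_sum_erase _ (fun k => volume (A k)) (Finset.mem_erase.mpr ⟨hne, Finset.mem_univ _⟩)
      have t2 : volume (A (Fin.last n)) + ∑ k ∈ Finset.univ.erase (Fin.last n), volume (A k)
          = ∑ k, volume (A k) := Finset.add_sum_erase _ (fun k => volume (A k)) (Finset.mem_univ _)
      calc volume (A j.castSucc) + volume (A (Fin.last n)) + ∑ k ∈ s, volume (A k)
          = volume (A (Fin.last n)) + (volume (A j.castSucc) + ∑ k ∈ s, volume (A k)) := by
            ring
        _ = 1 := by rw [t1, t2, hsumvol]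
    have hc1 : (1:ℝ≥0∞) ≤ volume (⋃ k, A k) := by
      calc (1:ℝ≥0∞) = volume (Set.Icc (0:ℝ) 1) := by rw [Real.volume_Icc]; norm_num
        _ ≤ _ := measure_mono hcover
    have hzero : volume (A j.castSucc ∩ A (Fin.last n)) = 0 := by
      have : (1:ℝ≥0∞) + volume (A j.castSucc ∩ A (Fin.last n)) ≤ 1 + 0 := by
        calc (1:ℝ≥0∞) + volume (A j.castSucc ∩ A (Fin.last n))
            ≤ volume (⋃ k, A k) + volume (A j.castSucc ∩ A (Fin.last n)) :=
              add_le_add_left hc1 _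
          _ ≤ volume (A j.castSucc ∪ A (Fin.last n)) + ∑ k ∈ s, volume (A k)
              + volume (A j.castSucc ∩ A (Fin.last n)) := add_le_add_left e2 _
          _ = volume (A j.castSucc) + volume (A (Fin.last n)) + ∑ k ∈ s, volume (A k) := by
              rw [← e1]; ring
          _ = 1 := e3
          _ = 1 + 0 := by rw [add_zero]
      exact le_antisymm (ENNReal.le_of_add_le_add_left (by norm_num) this) zero_le
    rw [hAlast] at hzero
    rw [hA_def] at hzero
    simp only [Set.Icc_inter_Icc, Real.volume_Icc, ENNReal.ofReal_eq_zero] at hzero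
    have hle : (y j.castSucc + ρ j.castSucc) ⊓ (Y + u)
        ≤ (y j.castSucc - ρ j.castSucc) ⊔ (Y - u) := by linarith
    rcases le_sup_iff.mp hle with h | h
    · rcases inf_le_iff.mp h with h' | h'
      · exfalso; linarith [hρpos j.castSucc]
      · exact Or.inr h'
    · rcases inf_le_iff.mp h with h' | h'
      · exact Or.inl h'
      · exfalso; linarith
  -- Split the other sensors into left and right of the last interval
  set I : Finset (Fin n) :=
    Finset.univ.filter (fun j => y j.castSucc + ρ j.castSucc ≤ Y - u) with hI_def
  set J : Finset (Fin n) :=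
    Finset.univ.filter (fun j => ¬(y j.castSucc + ρ j.castSucc ≤ Y - u)) with hJ_def
  have hρc0 : ∀ j : Fin n, 0 ≤ 2 * ρ j.castSucc := fun j => by linarith [hρpos j.castSucc]
  have hleft : Y - u ≤ ∑ j ∈ I, 2 * ρ j.castSucc := by
    by_cases hc : Y - u ≤ 0
    · exact hc.trans (Finset.sum_nonneg (fun j _ => hρc0 j))
    push_neg at hc
    have hcov' : Set.Ico (0:ℝ) (Y - u) ⊆ ⋃ j ∈ I, A j.castSucc := by
      rintro x ⟨hx0, hxc⟩
      have hx1 : x ∈ Set.Icc (0:ℝ) 1 := ⟨hx0, by linarith⟩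
      obtain ⟨k, hk⟩ := Set.mem_iUnion.mp (hcover hx1)
      rcases Fin.eq_castSucc_or_eq_last k with ⟨j, rfl⟩ | rfl
      · rcases hdisj j with hl | hrt
        · exact Set.mem_biUnion (Finset.mem_filter.mpr ⟨Finset.mem_univ _, hl⟩) hk
        · exfalso
          have : y j.castSucc - ρ j.castSucc ≤ x := hk.1
          linarith
      · exfalso
        have hh : Y - u ≤ x := by
          have := hk.1
          rwa [hρl, ← hY_def] at this
        linarith
    have hm : ENNReal.ofReal (Y - u) ≤ ENNReal.ofReal (∑ j ∈ I, 2 * ρ j.castSucc) := by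
      calc ENNReal.ofReal (Y - u) = volume (Set.Ico (0:ℝ) (Y - u)) := by
            rw [Real.volume_Ico]; norm_num
        _ ≤ volume (⋃ j ∈ I, A j.castSucc) := measure_mono hcov'
        _ ≤ ∑ j ∈ I, volume (A j.castSucc) := measure_biUnion_finset_le _ _
        _ = ∑ j ∈ I, ENNReal.ofReal (2 * ρ j.castSucc) :=
            Finset.sum_congr rfl (fun j _ => hvol j.castSucc)
        _ = ENNReal.ofReal (∑ j ∈ I, 2 * ρ j.castSucc) :=
            (ENNReal.ofReal_sum_of_nonneg (fun j _ => hρc0 j)).symm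
    exact (ENNReal.ofReal_le_ofReal_iff (Finset.sum_nonneg (fun j _ => hρc0 j))).mp hm
  have hright : 1 - (Y + u) ≤ ∑ j ∈ J, 2 * ρ j.castSucc := by
    by_cases hc : 1 - (Y + u) ≤ 0
    · exact hc.trans (Finset.sum_nonneg (fun j _ => hρc0 j))
    push_neg at hc
    have hcov' : Set.Ioc (Y + u) 1 ⊆ ⋃ j ∈ J, A j.castSucc := by
      rintro x ⟨hxl, hx1'⟩
      have hx1 : x ∈ Set.Icc (0:ℝ) 1 := ⟨by linarith, hx1'⟩
      obtain ⟨k, hk⟩ := Set.mem_iUnion.mp (hcover hx1)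
      rcases Fin.eq_castSucc_or_eq_last k with ⟨j, rfl⟩ | rfl
      · rcases hdisj j with hl | hrt
        · exfalso
          have : x ≤ y j.castSucc + ρ j.castSucc := hk.2
          linarith
        · refine Set.mem_biUnion (Finset.mem_filter.mpr ⟨Finset.mem_univ _, ?_⟩) hk
          intro hcon
          linarith [hρpos j.castSucc]
      · exfalso
        have hh : x ≤ Y + u := by
          have := hk.2
          rwa [hρl, ← hY_def] at this
        linarith
    have hm : ENNReal.ofReal (1 - (Y + u)) ≤ ENNReal.ofReal (∑ j ∈ J, 2 * ρ j.castSucc) := by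
      calc ENNReal.ofReal (1 - (Y + u)) = volume (Set.Ioc (Y + u) 1) := by
            rw [Real.volume_Ioc]
        _ ≤ volume (⋃ j ∈ J, A j.castSucc) := measure_mono hcov'
        _ ≤ ∑ j ∈ J, volume (A j.castSucc) := measure_biUnion_finset_le _ _
        _ = ∑ j ∈ J, ENNReal.ofReal (2 * ρ j.castSucc) :=
            Finset.sum_congr rfl (fun j _ => hvol j.castSucc)
        _ = ENNReal.ofReal (∑ j ∈ J, 2 * ρ j.castSucc) :=
            (ENNReal.ofReal_sum_of_nonneg (fun j _ => hρc0 j)).symm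
    exact (ENNReal.ofReal_le_ofReal_iff (Finset.sum_nonneg (fun j _ => hρc0 j))).mp hm
  have hsplit : ∑ j ∈ I, 2 * ρ j.castSucc + ∑ j ∈ J, 2 * ρ j.castSucc = 1 - 2*u := by
    rw [hI_def, hJ_def, Finset.sum_filter_add_sum_filter_not]
    have h1 : ∑ i : Fin (n+1), 2 * ρ i = 1 := by
      simp only [← Finset.mul_sum]; rw [hsumρ]; ring
    rw [Fin.sum_univ_castSucc] at h1
    rw [hρl] at h1
    linarith
  have heqI : ∑ j ∈ I, 2 * ρ j.castSucc = Y - u := by linarith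
  -- Extract the partition
  set Wn : ℕ := ∑ j ∈ I, w j with hWn_def
  have hWr : (Wn:ℝ) * (2*u) = Y - u := by
    rw [← heqI, hWn_def]
    push_cast
    rw [Finset.sum_mul]
    apply Finset.sum_congr rfl
    intro j _
    rw [hρc]
    ring
  have hr1 : (2*(Wn:ℝ)) * u = Y - u := by rw [← hWr]; ring
  have hhalf' : ((B:ℝ)+1) * u = 1/2 := by rw [mul_comm]; exact hhalf
  have h2W : 2 * Wn = B := by
    have hlt1 : (2*(Wn:ℝ)) * u < ((B:ℝ)+1) * u := by
      rw [hr1, hhalf']; linarith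
    have hlt2 : ((B:ℝ)-1) * u < (2*(Wn:ℝ)) * u := by
      rw [hr1]
      have hx : ((B:ℝ)-1)*u = ((B:ℝ)+1)*u - 2*u := by ring
      linarith
    have hn1 : (2*(Wn:ℝ)) < (B:ℝ)+1 := lt_of_mul_lt_mul_right hlt1 hu.le
    have hn2 : (B:ℝ)-1 < 2*(Wn:ℝ) := lt_of_mul_lt_mul_right hlt2 hu.le
    have hn1' : 2 * Wn < B + 1 := by exact_mod_cast hn1
    have hn2' : B < 2 * Wn + 1 := by
      have : (B:ℝ) < 2*(Wn:ℝ) + 1 := by linarith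
      exact_mod_cast this
    omega
  have hBr : (2:ℝ) * Wn = B := by exact_mod_cast h2W
  refine ⟨hreq, ?_, ⟨I, ?_⟩⟩
  · have e : (Wn:ℝ) * (2*u) = (B:ℝ) * u := by rw [← hBr]; ring
    have e2 : (B:ℝ) * u + u = 1/2 := by rw [← hhalf]; ring
    linarith [hWr]
  · have hc : (Wn:ℝ) = ∑ j ∈ I, (w j : ℝ) := by
      rw [hWn_def]; push_cast; ring
    rw [← hc]
    linarith
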